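/- arXiv:1603.06037 — 2 statements merged into one kernel-verified Lean document; each statement's English description precedes it below -/
import Mathlib

section
/- For every x > 0 and μ > 0, x·log x - μ·log μ - (1 + log μ)(x - μ) ≥ (x-μ)²/(2·max(x,μ)). Moreover, if |x - μ| ≥ μ then x·log x - μ·log μ - (1+log μ)(x-μ) ≥ |x-μ|/4, and if |x-μ| ≤ μ then it is ≥ |x-μ|²/(4μ). -/
open Real Set

-- (t+1) log t ≥ 2(t-1) for t ≥ 1
lemma aux1 (t : ℝ) (ht : 1 ≤ t) : 2 * (t - 1) ≤ (t + 1) * Real.log t := by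
  have key : MonotoneOn (fun s : ℝ => (s + 1) * Real.log s - 2 * (s - 1)) (Ici 1) := by
    apply monotoneOn_of_deriv_nonneg (convex_Ici 1)
    · apply ContinuousOn.sub
      · exact ContinuousOn.mul (by fun_prop)
          (Real.continuousOn_log.mono (fun s hs => by
            simp only [mem_Ici] at hs; simp; intro h; linarith))
      · fun_prop
    · intro s hs
      rw [interior_Ici] at hs
      have hs0 : (0:ℝ) < s := lt_trans one_pos hs
      exact (((differentiableAt_id.add_const 1).mul (Real.differentiableAt_log hs0.ne')).sub
        (by fun_prop)).differentiableWithinAt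
    · intro s hs
      rw [interior_Ici] at hs
      have hs0 : (0:ℝ) < s := lt_trans one_pos hs
      have hd : HasDerivAt (fun s : ℝ => (s + 1) * Real.log s - 2 * (s - 1))
          (1 * Real.log s + (s + 1) * s⁻¹ - 2 * 1) s := by
        exact (((hasDerivAt_id s).add_const 1).mul (Real.hasDerivAt_log hs0.ne')).sub
          ((hasDerivAt_id s).sub_const 1 |>.const_mul 2)
      rw [hd.deriv]
      have hlog := Real.one_sub_inv_le_log_of_pos hs0
      have : (s + 1) * s⁻¹ = 1 + s⁻¹ := by field_simp
      rw [this]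
      have hinv : s⁻¹ < 1 := by rw [inv_lt_one_iff₀]; right; exact hs
      linarith
  have h := key (self_mem_Ici) (mem_Ici.mpr ht) ht
  simp only [Real.log_one] at h
  linarith

-- t log t - t + 1 ≥ (t-1)²/2 for 0 < t ≤ 1
lemma aux2 (t : ℝ) (ht0 : 0 < t) (ht : t ≤ 1) :
    (t - 1) ^ 2 / 2 ≤ t * Real.log t - t + 1 := by
  have key : AntitoneOn (fun s : ℝ => s * Real.log s - s + 1 - (s - 1) ^ 2 / 2) (Ioc 0 1) := by
    apply antitoneOn_of_deriv_nonpos (convex_Ioc 0 1)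
    · apply ContinuousOn.sub
      · apply ContinuousOn.add
        · apply ContinuousOn.sub
          · exact ContinuousOn.mul (by fun_prop)
              (Real.continuousOn_log.mono (fun s hs => by
                simp only [mem_Ioc] at hs; simp; exact hs.1.ne'))
          · fun_prop
        · fun_prop
      · fun_prop
    · intro s hs
      rw [interior_Ioc] at hs
      exact ((differentiableAt_id.mul (Real.differentiableAt_log hs.1.ne')).sub
        differentiableAt_id |>.add_const 1 |>.sub (by fun_prop)).differentiableWithinAt
    · intro s hs
      rw [interior_Ioc] at hs
      have hs0 : (0:ℝ) < s := hs.1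
      have hd := ((((hasDerivAt_id s).mul (Real.hasDerivAt_log hs0.ne')).sub (hasDerivAt_id s)).add_const 1).sub
          ((((hasDerivAt_id s).sub_const 1).pow 2).div_const 2)
      simp only [id_eq] at hd
      rw [show deriv (fun s : ℝ => s * Real.log s - s + 1 - (s - 1) ^ 2 / 2) s = _ from hd.deriv]
      have hlog := Real.log_le_sub_one_of_pos hs0
      have hss : s * s⁻¹ = 1 := mul_inv_cancel₀ hs0.ne'
      push_cast
      norm_num
      nlinarith
  have h := key (mem_Ioc.mpr ⟨ht0, ht⟩) (mem_Ioc.mpr ⟨one_pos, le_refl 1⟩) ht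
  simp only [Real.log_one] at h
  linarith

theorem stmt_4 (x μ : ℝ) (hx : 0 < x) (hμ : 0 < μ) :
    x * Real.log x - μ * Real.log μ - (1 + Real.log μ) * (x - μ)
      ≥ (x - μ) ^ 2 / (2 * max x μ) ∧
    (|x - μ| ≥ μ →
      x * Real.log x - μ * Real.log μ - (1 + Real.log μ) * (x - μ) ≥ |x - μ| / 4) ∧
    (|x - μ| ≤ μ →
      x * Real.log x - μ * Real.log μ - (1 + Real.log μ) * (x - μ) ≥ |x - μ| ^ 2 / (4 * μ)) := by
  set L := x * Real.log x - μ * Real.log μ - (1 + Real.log μ) * (x - μ) with hL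
  have hlog : Real.log x = Real.log μ + Real.log (x / μ) := by
    rw [Real.log_div hx.ne' hμ.ne']; ring
  set t := x / μ with htdef
  have ht0 : 0 < t := div_pos hx hμ
  have hxt : x = μ * t := by rw [htdef]; field_simp
  have hLt : L = μ * (t * Real.log t - t + 1) := by
    rw [hL, hlog, hxt]; ring
  have main : L ≥ (x - μ) ^ 2 / (2 * max x μ) := by
    rcases le_total μ x with hc | hc
    · -- t ≥ 1, max = x
      have ht1 : 1 ≤ t := (one_le_div hμ).mpr hc
      rw [max_eq_left hc]
      have h1 := aux1 t ht1
      -- t log t - t + 1 ≥ (t-1)²/(2t)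
      have h2 : (t - 1) ^ 2 / (2 * t) ≤ t * Real.log t - t + 1 := by
        rw [div_le_iff₀ (by linarith : (0:ℝ) < 2 * t)]
        nlinarith [mul_le_mul_of_nonneg_left h1 (le_of_lt ht0)]
      rw [hLt, hxt]
      have h2t : (0:ℝ) < 2 * t := by linarith
      calc (μ * t - μ) ^ 2 / (2 * (μ * t)) = μ * ((t - 1) ^ 2 / (2 * t)) := by
            field_simp
        _ ≤ μ * (t * Real.log t - t + 1) := by
            exact mul_le_mul_of_nonneg_left h2 hμ.le
    · -- t ≤ 1, max = μ
      have ht1 : t ≤ 1 := (div_le_one hμ).mpr hc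
      rw [max_eq_right hc]
      have h2 := aux2 t ht0 ht1
      rw [hLt, hxt]
      calc (μ * t - μ) ^ 2 / (2 * μ) = μ * ((t - 1) ^ 2 / 2) := by
            field_simp
        _ ≤ μ * (t * Real.log t - t + 1) := mul_le_mul_of_nonneg_left h2 hμ.le
  refine ⟨main, ?_, ?_⟩
  · intro habs
    rcases le_total μ x with hc | hc
    · rw [abs_of_nonneg (by linarith)] at habs ⊢
      have hx2 : 2 * μ ≤ x := by linarith
      have hmax : max x μ = x := max_eq_left hc
      rw [hmax] at main
      refine le_trans ?_ main
      rw [div_le_div_iff₀ (by norm_num) (by linarith)]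
      nlinarith
    · rw [abs_of_nonpos (by linarith)] at habs
      linarith
  · intro habs
    rcases le_total μ x with hc | hc
    · rw [abs_of_nonneg (by linarith)] at habs ⊢
      have hmax : max x μ = x := max_eq_left hc
      rw [hmax] at main
      refine le_trans ?_ main
      apply div_le_div_of_nonneg_left (by positivity) (by linarith) (by linarith)
    · rw [abs_of_nonpos (by linarith)]
      have hmax : max x μ = μ := max_eq_right hc
      rw [hmax] at main
      refine le_trans ?_ main
      rw [neg_sub]
      have : (μ - x)^2 = (x - μ)^2 := by ring
      rw [this]
      apply div_le_div_of_nonneg_left (by positivity) (by linarith) (by linarith)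
end

section
/- Let a > 1, b > 1, and 0 < r ≤ min(a, b). Then there exists C = C(a, b, r) such that for all t ≥ 0: ∫₀ᵗ (1+t-s)^{-a} ∫₀ˢ (1+s-τ)^{-b} (1+τ)^{-r} dτ ds ≤ C (1+t)^{-r}. -/
open Real MeasureTheory

/-- Integrability helper: `s ↦ (1+t-s)^p * (1+s)^q` is interval integrable on `[c,d] ⊆ [0,t]`. -/
lemma aux_contOn (p q t c d : ℝ) (h0 : 0 ≤ min c d) (h1 : max c d ≤ t) :
    IntervalIntegrable (fun s => (1 + t - s) ^ p * (1 + s) ^ q) volume c d := by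
  apply ContinuousOn.intervalIntegrable
  have hmem : ∀ x ∈ Set.uIcc c d, 0 ≤ x ∧ x ≤ t := by
    intro x hx
    rw [Set.uIcc, Set.mem_Icc] at hx
    exact ⟨le_trans h0 hx.1, le_trans hx.2 h1⟩
  apply ContinuousOn.mul
  · apply ContinuousOn.rpow_const (by fun_prop)
    intro x hx
    obtain ⟨hx0, hxt⟩ := hmem x hx
    left; nlinarith
  · apply ContinuousOn.rpow_const (by fun_prop)
    intro x hx
    obtain ⟨hx0, hxt⟩ := hmem x hx
    left; nlinarith

/-- Sublemma: `∫₀ᵗ (1+s)^{-r} ds ≤ K (1+t)^{a-r}` when `1 < a`, `0 < r ≤ a`. -/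
lemma aux_B (a r : ℝ) (ha : 1 < a) (hr0 : 0 < r) (hra : r ≤ a) :
    ∃ K : ℝ, 0 < K ∧ ∀ t : ℝ, 0 ≤ t →
      (∫ s in (0 : ℝ)..t, (1 + s) ^ (-r)) ≤ K * (1 + t) ^ (a - r) := by
  have hmin : 0 < min r (a - 1) := lt_min hr0 (by linarith)
  obtain ⟨ρ, hρpos, hρler, hρcase⟩ :
      ∃ ρ : ℝ, 0 < ρ ∧ ρ ≤ r ∧ ((ρ < 1 ∧ 1 - ρ ≤ a - r) ∨ 1 < ρ) := by
    by_cases h : r ≤ 1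
    · refine ⟨r - min r (a - 1) / 2, ?_, ?_, Or.inl ⟨?_, ?_⟩⟩
      · have : min r (a - 1) ≤ r := min_le_left _ _
        nlinarith
      · nlinarith
      · nlinarith
      · have : min r (a - 1) ≤ a - 1 := min_le_right _ _
        nlinarith
    · exact ⟨r, hr0, le_rfl, Or.inr (by linarith)⟩
  have hρne1 : ρ ≠ 1 := by rcases hρcase with ⟨h, -⟩ | h <;> [exact ne_of_lt h; exact ne_of_gt h]
  refine ⟨1 / |1 - ρ| + 1, by positivity, fun t ht => ?_⟩
  have h1t : (0 : ℝ) < 1 + t := by linarith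
  have step1 : (∫ s in (0 : ℝ)..t, (1 + s) ^ (-r)) ≤ ∫ s in (0 : ℝ)..t, (1 + s) ^ (-ρ) := by
    apply intervalIntegral.integral_mono_on ht
    · simpa using aux_contOn 0 (-r) t 0 t (le_min le_rfl ht) (max_le ht le_rfl)
    · simpa using aux_contOn 0 (-ρ) t 0 t (le_min le_rfl ht) (max_le ht le_rfl)
    · intro s hs
      rcases hs with ⟨hs0, hst⟩
      exact Real.rpow_le_rpow_of_exponent_le (by linarith) (by linarith)
  have step2 : (∫ s in (0 : ℝ)..t, (1 + s) ^ (-ρ)) =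
      ((1 + t) ^ (-ρ + 1) - 1) / (-ρ + 1) := by
    have heq : (∫ s in (0 : ℝ)..t, (1 + s) ^ (-ρ)) = ∫ u in (1 : ℝ)..(1 + t), u ^ (-ρ) := by
      have := intervalIntegral.integral_comp_add_left (a := (0 : ℝ)) (b := t)
        (fun u => u ^ (-ρ)) 1
      simpa using this
    rw [heq, integral_rpow]
    · norm_num
    · right
      constructor
      · intro h; apply hρne1; linarith [neg_eq_iff_eq_neg.mp h]
      · rw [Set.uIcc_of_le (by linarith)]
        rintro ⟨h0, -⟩; linarith
  rw [step2] at step1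
  refine le_trans step1 ?_
  have hX0 : (0 : ℝ) ≤ (1 + t) ^ (a - r) := Real.rpow_nonneg (by linarith) _
  rcases hρcase with ⟨hlt, hexp⟩ | hgt
  · -- ρ < 1
    have habs : |1 - ρ| = 1 - ρ := abs_of_pos (by linarith)
    have hm : (1 + t) ^ (-ρ + 1) ≤ (1 + t) ^ (a - r) :=
      Real.rpow_le_rpow_of_exponent_le (by linarith) (by linarith)
    have hden : (0 : ℝ) < -ρ + 1 := by linarith
    rw [habs]
    calc ((1 + t) ^ (-ρ + 1) - 1) / (-ρ + 1)
        ≤ (1 + t) ^ (a - r) / (-ρ + 1) := by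
          rw [div_le_div_iff_of_pos_right hden]
          linarith
      _ = 1 / (1 - ρ) * (1 + t) ^ (a - r) := by ring
      _ ≤ (1 / (1 - ρ) + 1) * (1 + t) ^ (a - r) := by nlinarith
  · -- ρ > 1
    have habs : |1 - ρ| = ρ - 1 := by rw [abs_of_neg (by linarith)]; ring
    have hpow_le : (1 + t) ^ (-ρ + 1) ≤ 1 :=
      Real.rpow_le_one_of_one_le_of_nonpos (by linarith) (by linarith)
    have hpow_pos : (0 : ℝ) ≤ (1 + t) ^ (-ρ + 1) := Real.rpow_nonneg (by linarith) _
    have h1 : ((1 + t) ^ (-ρ + 1) - 1) / (-ρ + 1) ≤ 1 / (ρ - 1) := by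
      have heq : ((1 + t) ^ (-ρ + 1) - 1) / (-ρ + 1) =
          (1 - (1 + t) ^ (-ρ + 1)) / (ρ - 1) := by
        rw [div_eq_div_iff (by linarith) (by linarith)]
        ring
      rw [heq, div_le_div_iff_of_pos_right (by linarith : (0:ℝ) < ρ - 1)]
      linarith
    have h2 : (1 : ℝ) ≤ (1 + t) ^ (a - r) :=
      Real.one_le_rpow (by linarith) (by linarith)
    calc ((1 + t) ^ (-ρ + 1) - 1) / (-ρ + 1) ≤ 1 / (ρ - 1) := h1
      _ ≤ (1 / |1 - ρ| + 1) * (1 + t) ^ (a - r) := by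
          rw [habs]
          nlinarith [div_nonneg (zero_le_one) (by linarith : (0 : ℝ) ≤ ρ - 1)]

/-- Key convolution lemma. -/
lemma aux_L (a r : ℝ) (ha : 1 < a) (hr0 : 0 < r) (hra : r ≤ a) :
    ∃ C : ℝ, 0 < C ∧ ∀ t : ℝ, 0 ≤ t →
      (∫ s in (0 : ℝ)..t, (1 + t - s) ^ (-a) * (1 + s) ^ (-r)) ≤ C * (1 + t) ^ (-r) := by
  obtain ⟨K, hK, hB⟩ := aux_B a r ha hr0 hra
  refine ⟨2 ^ a * K + 2 ^ r / (a - 1), by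
    have h1 : (0:ℝ) < 2 ^ a * K := by positivity
    have h2 : (0:ℝ) < 2 ^ r / (a - 1) := div_pos (by positivity) (by linarith)
    linarith, fun t ht => ?_⟩
  have h1t : (0 : ℝ) < 1 + t := by linarith
  have hhalf : 0 ≤ t / 2 := by linarith
  have hhalft : t / 2 ≤ t := by linarith
  have hint1 : IntervalIntegrable (fun s => (1 + t - s) ^ (-a) * (1 + s) ^ (-r)) volume 0 (t / 2) :=
    aux_contOn (-a) (-r) t 0 (t / 2) (le_min le_rfl hhalf) (max_le ht hhalft)
  have hint2 : IntervalIntegrable (fun s => (1 + t - s) ^ (-a) * (1 + s) ^ (-r))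
      volume (t / 2) t :=
    aux_contOn (-a) (-r) t (t / 2) t (le_min hhalf ht) (max_le hhalft le_rfl)
  have hsplit : (∫ s in (0 : ℝ)..t, (1 + t - s) ^ (-a) * (1 + s) ^ (-r)) =
      (∫ s in (0 : ℝ)..(t / 2), (1 + t - s) ^ (-a) * (1 + s) ^ (-r)) +
      ∫ s in (t / 2 : ℝ)..t, (1 + t - s) ^ (-a) * (1 + s) ^ (-r) :=
    (intervalIntegral.integral_add_adjacent_intervals hint1 hint2).symm
  rw [hsplit]
  -- Piece 1
  have piece1 : (∫ s in (0 : ℝ)..(t / 2), (1 + t - s) ^ (-a) * (1 + s) ^ (-r)) ≤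
      2 ^ a * K * (1 + t) ^ (-r) := by
    have hfac : ((1 + t) / 2) ^ (-a) = 2 ^ a * (1 + t) ^ (-a) := by
      rw [Real.div_rpow (by linarith) (by norm_num), Real.rpow_neg (by norm_num : (0:ℝ) ≤ 2)]
      field_simp
    have hb1 : (∫ s in (0 : ℝ)..(t / 2), (1 + t - s) ^ (-a) * (1 + s) ^ (-r)) ≤
        ∫ s in (0 : ℝ)..(t / 2), (2 ^ a * (1 + t) ^ (-a)) * (1 + s) ^ (-r) := by
      apply intervalIntegral.integral_mono_on hhalf hint1
      · apply IntervalIntegrable.const_mul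
        simpa using aux_contOn 0 (-r) t 0 (t / 2) (le_min le_rfl hhalf) (max_le ht hhalft)
      · intro s hs
        rcases hs with ⟨hs0, hs2⟩
        have hmono : (1 + t - s) ^ (-a) ≤ ((1 + t) / 2) ^ (-a) :=
          Real.rpow_le_rpow_of_nonpos (by linarith) (by linarith) (by linarith)
        rw [hfac] at hmono
        exact mul_le_mul_of_nonneg_right hmono (Real.rpow_nonneg (by linarith) _)
    rw [intervalIntegral.integral_const_mul] at hb1
    refine le_trans hb1 ?_
    have hB2 := hB (t / 2) hhalf
    have hpow : (1 + t / 2) ^ (a - r) ≤ (1 + t) ^ (a - r) :=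
      Real.rpow_le_rpow (by linarith) (by linarith) (by linarith)
    have hcoef : (0 : ℝ) ≤ 2 ^ a * (1 + t) ^ (-a) := by positivity
    calc 2 ^ a * (1 + t) ^ (-a) * ∫ s in (0 : ℝ)..(t / 2), (1 + s) ^ (-r)
        ≤ 2 ^ a * (1 + t) ^ (-a) * (K * (1 + t) ^ (a - r)) := by
          apply mul_le_mul_of_nonneg_left _ hcoef
          exact le_trans hB2 (mul_le_mul_of_nonneg_left hpow (le_of_lt hK))
      _ = 2 ^ a * K * ((1 + t) ^ (-a) * (1 + t) ^ (a - r)) := by ring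
      _ = 2 ^ a * K * (1 + t) ^ (-r) := by
          rw [← Real.rpow_add h1t]; ring_nf
  -- Piece 2
  have piece2 : (∫ s in (t / 2 : ℝ)..t, (1 + t - s) ^ (-a) * (1 + s) ^ (-r)) ≤
      2 ^ r / (a - 1) * (1 + t) ^ (-r) := by
    have hfac : ((1 + t) / 2) ^ (-r) = 2 ^ r * (1 + t) ^ (-r) := by
      rw [Real.div_rpow (by linarith) (by norm_num), Real.rpow_neg (by norm_num : (0:ℝ) ≤ 2)]
      field_simp
    have hb1 : (∫ s in (t / 2 : ℝ)..t, (1 + t - s) ^ (-a) * (1 + s) ^ (-r)) ≤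
        ∫ s in (t / 2 : ℝ)..t, (1 + t - s) ^ (-a) * (2 ^ r * (1 + t) ^ (-r)) := by
      apply intervalIntegral.integral_mono_on hhalft hint2
      · apply IntervalIntegrable.mul_const
        simpa using aux_contOn (-a) 0 t (t / 2) t (le_min hhalf ht) (max_le hhalft le_rfl)
      · intro s hs
        rcases hs with ⟨hs2, hst⟩
        have hmono : (1 + s) ^ (-r) ≤ ((1 + t) / 2) ^ (-r) :=
          Real.rpow_le_rpow_of_nonpos (by linarith) (by linarith) (by linarith)
        rw [hfac] at hmono
        exact mul_le_mul_of_nonneg_left hmono (Real.rpow_nonneg (by linarith) _)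
    rw [intervalIntegral.integral_mul_const] at hb1
    refine le_trans hb1 ?_
    have hsub : (∫ s in (t / 2 : ℝ)..t, (1 + t - s) ^ (-a)) =
        ∫ u in (1 : ℝ)..(1 + t / 2), u ^ (-a) := by
      have := intervalIntegral.integral_comp_sub_left (a := t / 2) (b := t)
        (fun u => u ^ (-a)) (1 + t)
      rw [this]
      norm_num
      ring_nf
    have hval : (∫ u in (1 : ℝ)..(1 + t / 2), u ^ (-a)) ≤ 1 / (a - 1) := by
      rw [integral_rpow]
      · have hpp : (0 : ℝ) ≤ (1 + t / 2) ^ (-a + 1) := Real.rpow_nonneg (by linarith) _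
        rw [Real.one_rpow]
        have heq : ((1 + t / 2) ^ (-a + 1) - 1) / (-a + 1) =
            (1 - (1 + t / 2) ^ (-a + 1)) / (a - 1) := by
          rw [div_eq_div_iff (by linarith) (by linarith)]
          ring
        rw [heq, div_le_div_iff_of_pos_right (by linarith : (0:ℝ) < a - 1)]
        linarith
      · right
        refine ⟨by intro h; have := neg_eq_iff_eq_neg.mp h; linarith, ?_⟩
        rw [Set.uIcc_of_le (by linarith)]
        rintro ⟨h0, -⟩; linarith
    rw [hsub]
    have hcoef : (0 : ℝ) ≤ 2 ^ r * (1 + t) ^ (-r) := by positivity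
    calc (∫ u in (1 : ℝ)..(1 + t / 2), u ^ (-a)) * (2 ^ r * (1 + t) ^ (-r))
        ≤ 1 / (a - 1) * (2 ^ r * (1 + t) ^ (-r)) := mul_le_mul_of_nonneg_right hval hcoef
      _ = 2 ^ r / (a - 1) * (1 + t) ^ (-r) := by ring
  calc _ ≤ 2 ^ a * K * (1 + t) ^ (-r) + 2 ^ r / (a - 1) * (1 + t) ^ (-r) :=
        add_le_add piece1 piece2
    _ = (2 ^ a * K + 2 ^ r / (a - 1)) * (1 + t) ^ (-r) := by ring

theorem stmt_10 (a b r : ℝ) (ha : 1 < a) (hb : 1 < b) (hr0 : 0 < r)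
    (hr : r ≤ min a b) :
    ∃ C : ℝ, 0 < C ∧ ∀ t : ℝ, 0 ≤ t →
      (∫ s in (0 : ℝ)..t, (1 + t - s) ^ (-a) *
          ∫ τ in (0 : ℝ)..s, (1 + s - τ) ^ (-b) * (1 + τ) ^ (-r))
        ≤ C * (1 + t) ^ (-r) := by
  have hra : r ≤ a := le_trans hr (min_le_left _ _)
  have hrb : r ≤ b := le_trans hr (min_le_right _ _)
  obtain ⟨Ca, hCa, hLa⟩ := aux_L a r ha hr0 hra
  obtain ⟨Cb, hCb, hLb⟩ := aux_L b r hb hr0 hrb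
  refine ⟨Cb * Ca, by positivity, fun t ht => ?_⟩
  set f : ℝ → ℝ := fun s => (1 + t - s) ^ (-a) *
      ∫ τ in (0 : ℝ)..s, (1 + s - τ) ^ (-b) * (1 + τ) ^ (-r) with hf
  set D : ℝ → ℝ := fun s => (1 + t - s) ^ (-a) * (Cb * (1 + s) ^ (-r)) with hD
  have h1t : (0 : ℝ) < 1 + t := by linarith
  have key : (∫ s in Set.Ioc (0 : ℝ) t, f s) ≤ ∫ s in Set.Ioc (0 : ℝ) t, D s := by
    apply integral_mono_of_nonneg
    · rw [Filter.EventuallyLE, ae_restrict_iff' measurableSet_Ioc]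
      filter_upwards with s hs
      rcases hs with ⟨hs0, hst⟩
      apply mul_nonneg (Real.rpow_nonneg (by linarith) _)
      apply intervalIntegral.integral_nonneg (le_of_lt hs0)
      intro τ hτ
      rcases hτ with ⟨hτ0, hτs⟩
      exact mul_nonneg (Real.rpow_nonneg (by linarith) _) (Real.rpow_nonneg (by linarith) _)
    · rw [← IntegrableOn, ← intervalIntegrable_iff_integrableOn_Ioc_of_le ht]
      have hDeq : D = fun s => Cb * ((1 + t - s) ^ (-a) * (1 + s) ^ (-r)) := by
        funext s; simp only [hD]; ring
      rw [hDeq]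
      exact (aux_contOn (-a) (-r) t 0 t (le_min le_rfl ht) (max_le ht le_rfl)).const_mul Cb
    · rw [Filter.EventuallyLE, ae_restrict_iff' measurableSet_Ioc]
      filter_upwards with s hs
      rcases hs with ⟨hs0, hst⟩
      apply mul_le_mul_of_nonneg_left _ (Real.rpow_nonneg (by linarith) _)
      exact hLb s (le_of_lt hs0)
  have lhs_eq : (∫ s in (0 : ℝ)..t, f s) = ∫ s in Set.Ioc (0 : ℝ) t, f s :=
    intervalIntegral.integral_of_le ht
  have rhs_eq : (∫ s in Set.Ioc (0 : ℝ) t, D s) =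
      Cb * ∫ s in (0 : ℝ)..t, (1 + t - s) ^ (-a) * (1 + s) ^ (-r) := by
    rw [← intervalIntegral.integral_of_le ht, ← intervalIntegral.integral_const_mul]
    congr 1
    funext s
    simp only [hD]
    ring
  calc (∫ s in (0 : ℝ)..t, f s) = ∫ s in Set.Ioc (0 : ℝ) t, f s := lhs_eq
    _ ≤ ∫ s in Set.Ioc (0 : ℝ) t, D s := key
    _ = Cb * ∫ s in (0 : ℝ)..t, (1 + t - s) ^ (-a) * (1 + s) ^ (-r) := rhs_eq
    _ ≤ Cb * (Ca * (1 + t) ^ (-r)) :=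
        mul_le_mul_of_nonneg_left (hLa t ht) (le_of_lt hCb)
    _ = Cb * Ca * (1 + t) ^ (-r) := by ring
end
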